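/- For the 8-dimensional Lie algebra L_{8,22} with nonzero brackets [X_1,X_2]=2X_2, [X_1,X_3]=-2X_3, [X_2,X_3]=X_1, [X_1,X_4]=2X_4, [X_1,X_6]=-2X_6, [X_1,X_7]=X_7, [X_1,X_8]=-X_8, [X_2,X_5]=2X_4, [X_2,X_6]=X_5, [X_2,X_8]=X_7, [X_3,X_4]=X_5, [X_3,X_5]=2X_6, [X_3,X_7]=X_8, the polynomials I_1 = x_5^2 - 4x_4x_6 and I_2 = x_4x_8^2 + x_6x_7^2 - x_5x_7x_8 are annihilated by all coadjoint vector fields X̂_i = C_{ij}^k x_k ∂/∂x_j, i = 1,…,8. -/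

import Mathlib

open scoped BigOperators

noncomputable def Xhat {n : ℕ} (C : Fin n → Fin n → Fin n → ℝ)
    (F : (Fin n → ℝ) → ℝ) (i : Fin n) (x : Fin n → ℝ) : ℝ :=
  ∑ j, ∑ k, C i j k * x k * fderiv ℝ F x (Pi.single j 1)

def C822 : Fin 8 → Fin 8 → Fin 8 → ℝ := fun i j k =>
  match i.1, j.1, k.1 with
  | 0, 1, 1 => 2
  | 1, 0, 1 => -2
  | 0, 2, 2 => -2
  | 2, 0, 2 => 2
  | 1, 2, 0 => 1
  | 2, 1, 0 => -1
  | 0, 3, 3 => 2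
  | 3, 0, 3 => -2
  | 0, 5, 5 => -2
  | 5, 0, 5 => 2
  | 0, 6, 6 => 1
  | 6, 0, 6 => -1
  | 0, 7, 7 => -1
  | 7, 0, 7 => 1
  | 1, 4, 3 => 2
  | 4, 1, 3 => -2
  | 1, 5, 4 => 1
  | 5, 1, 4 => -1
  | 1, 7, 6 => 1
  | 7, 1, 6 => -1
  | 2, 3, 4 => 1
  | 3, 2, 4 => -1
  | 2, 4, 5 => 2
  | 4, 2, 5 => -2
  | 2, 6, 7 => 1
  | 6, 2, 7 => -1
  | _, _, _ => 0


noncomputable def L822pr (i : Fin 8) : ((Fin 8 → ℝ) →L[ℝ] ℝ) :=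
  ContinuousLinearMap.proj i

lemma L822hproj (i : Fin 8) (x : Fin 8 → ℝ) :
    HasFDerivAt (fun y : Fin 8 → ℝ => y i) (L822pr i) x := (L822pr i).hasFDerivAt

lemma L822fderiv1 (x v : Fin 8 → ℝ) :
    fderiv ℝ (fun y : Fin 8 → ℝ => (y 4)^2 - 4 * y 3 * y 5) x v
      = 2 * x 4 * v 4 - 4 * (v 3 * x 5 + x 3 * v 5) := by
  simp only [pow_two]
  have h := ((L822hproj 4 x).mul (L822hproj 4 x)).sub
    (((L822hproj 3 x).const_mul (4:ℝ)).mul (L822hproj 5 x))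
  erw [h.fderiv]
  simp [L822pr]
  ring

lemma L822fderiv2 (x v : Fin 8 → ℝ) :
    fderiv ℝ (fun y : Fin 8 → ℝ => y 3 * (y 7)^2 + y 5 * (y 6)^2 - y 4 * y 6 * y 7) x v
      = v 3 * (x 7)^2 + 2 * x 3 * x 7 * v 7 + v 5 * (x 6)^2 + 2 * x 5 * x 6 * v 6
        - (v 4 * x 6 * x 7 + x 4 * v 6 * x 7 + x 4 * x 6 * v 7) := by
  simp only [pow_two]
  have h := (((L822hproj 3 x).mul ((L822hproj 7 x).mul (L822hproj 7 x))).add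
      ((L822hproj 5 x).mul ((L822hproj 6 x).mul (L822hproj 6 x)))).sub
      (((L822hproj 4 x).mul (L822hproj 6 x)).mul (L822hproj 7 x))
  erw [h.fderiv]
  simp [L822pr]
  ring

set_option maxHeartbeats 4000000 in
theorem L822_invariants :
    ∀ (i : Fin 8) (x : Fin 8 → ℝ),
      Xhat C822 (fun y => (y 4)^2 - 4 * y 3 * y 5) i x = 0 ∧
      Xhat C822 (fun y => y 3 * (y 7)^2 + y 5 * (y 6)^2 - y 4 * y 6 * y 7) i x = 0 := by
  intro i x
  constructor
  · unfold Xhat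
    simp only [L822fderiv1]
    fin_cases i <;>
      · simp only [Fin.sum_univ_eight]
        norm_num [C822, Pi.single_apply]
        simp only [Fin.reduceEq, reduceIte, mul_zero, mul_one, zero_mul, mul_ite]
        try norm_num
        try ring
  · unfold Xhat
    simp only [L822fderiv2]
    fin_cases i <;>
      · simp only [Fin.sum_univ_eight]
        norm_num [C822, Pi.single_apply]
        simp only [Fin.reduceEq, reduceIte, mul_zero, mul_one, zero_mul, mul_ite]
        try norm_num
        try ring
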